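/- Let L be a graph Laplacian matrix indexed by a finite set V, let S ⊆ V with T = V \ S, and suppose the principal submatrix L_{SS} is invertible. Then the Schur complement L_{TT} − L_{TS} L_{SS}^{-1} L_{ST} is again a graph Laplacian matrix indexed by T (i.e., it is symmetric, its off-diagonal entries are nonpositive, and each of its column sums is zero). -/

import Mathlib

open Matrix BigOperators

/-- The Schur complement of `S` in `A`, as a matrix indexed by the complement of `S`. -/
noncomputable def schurCompl {V : Type*} [Fintype V] [DecidableEq V]
    (A : Matrix V V ℝ) (S : Finset V) : Matrix ↥Sᶜ ↥Sᶜ ℝ :=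
  A.submatrix (fun a : ↥Sᶜ => (a : V)) (fun a : ↥Sᶜ => (a : V))
    - A.submatrix (fun a : ↥Sᶜ => (a : V)) (fun a : ↥S => (a : V))
      * (A.submatrix (fun a : ↥S => (a : V)) (fun a : ↥S => (a : V)))⁻¹
      * A.submatrix (fun a : ↥S => (a : V)) (fun a : ↥Sᶜ => (a : V))


open Finset in

lemma aux_psd {n : Type*} [Fintype n] [DecidableEq n] (A : Matrix n n ℝ)
    (hsym : Aᵀ = A) (hoff : ∀ i j, i ≠ j → A i j ≤ 0)
    (hdom : ∀ i, 0 ≤ A i i + ∑ j ∈ Finset.univ.erase i, A i j) : A.PosSemidef := by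
  have hAs : ∀ i j, A j i = A i j := fun i j => congrFun (congrFun hsym i) j
  refine posSemidef_iff_dotProduct_mulVec.mpr ⟨?_, ?_⟩
  · ext i j
    rw [conjTranspose_apply, star_trivial, hAs]
  · intro x
    rw [star_trivial]
    have swap : ∑ i, ∑ j ∈ Finset.univ.erase i, A i j * x j ^ 2
        = ∑ i, ∑ j ∈ Finset.univ.erase i, A i j * x i ^ 2 := by
      rw [Finset.sum_comm' (t' := Finset.univ) (s' := fun j => Finset.univ.erase j)
        (by intro a b; simp [Finset.mem_erase, ne_comm, eq_comm, and_comm])]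
      exact Finset.sum_congr rfl fun i _ => Finset.sum_congr rfl fun j _ => by rw [hAs]
    have key : ∑ i, (A i i + ∑ j ∈ Finset.univ.erase i, A i j) * x i ^ 2
        ≤ x ⬝ᵥ A *ᵥ x := by
      have expand : ∑ i, (A i i + ∑ j ∈ Finset.univ.erase i, A i j) * x i ^ 2
          = ∑ i, (A i i * x i ^ 2
              + ∑ j ∈ Finset.univ.erase i, A i j * ((x i ^ 2 + x j ^ 2) / 2)) := by
        have h1 : ∀ i : n, (A i i + ∑ j ∈ Finset.univ.erase i, A i j) * x i ^ 2
            = A i i * x i ^ 2 + ∑ j ∈ Finset.univ.erase i, A i j * x i ^ 2 := by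
          intro i; rw [add_mul, Finset.sum_mul]
        have h2 : ∀ i : n, ∑ j ∈ Finset.univ.erase i, A i j * ((x i ^ 2 + x j ^ 2) / 2)
            = (∑ j ∈ Finset.univ.erase i, A i j * x i ^ 2) / 2
              + (∑ j ∈ Finset.univ.erase i, A i j * x j ^ 2) / 2 := by
          intro i
          rw [Finset.sum_div, Finset.sum_div, ← Finset.sum_add_distrib]
          exact Finset.sum_congr rfl fun j _ => by ring
        simp only [h1, h2, Finset.sum_add_distrib]
        simp only [← Finset.sum_div]
        rw [swap]
        ring
      rw [expand]
      have dp : x ⬝ᵥ A *ᵥ x = ∑ i, (x i * (A i i * x i)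
          + ∑ j ∈ Finset.univ.erase i, x i * (A i j * x j)) := by
        simp only [dotProduct, mulVec, Finset.mul_sum]
        exact Finset.sum_congr rfl fun i _ =>
          (Finset.add_sum_erase Finset.univ _ (Finset.mem_univ i)).symm
      rw [dp]
      refine Finset.sum_le_sum fun i _ => add_le_add (le_of_eq (by ring)) ?_
      refine Finset.sum_le_sum fun j hj => ?_
      have hij : i ≠ j := (Finset.ne_of_mem_erase hj).symm
      have h1 : x i * x j ≤ (x i ^ 2 + x j ^ 2) / 2 := by nlinarith [sq_nonneg (x i - x j)]
      have := mul_le_mul_of_nonpos_left h1 (hoff i j hij)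
      calc A i j * ((x i ^ 2 + x j ^ 2) / 2) ≤ A i j * (x i * x j) := this
        _ = x i * (A i j * x j) := by ring
    refine le_trans ?_ key
    exact Finset.sum_nonneg fun i _ => mul_nonneg (hdom i) (sq_nonneg _)

lemma aux_inv_nonneg {n : Type*} [Fintype n] [DecidableEq n] (A : Matrix n n ℝ)
    (hpsd : A.PosSemidef) (hoff : ∀ i j, i ≠ j → A i j ≤ 0)
    (hinv : IsUnit A.det) : ∀ i j, 0 ≤ A⁻¹ i j := by
  intro i0 j
  set x : n → ℝ := A⁻¹ *ᵥ Pi.single j 1 with hxdef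
  have hAx : A *ᵥ x = Pi.single j 1 := by
    rw [hxdef, mulVec_mulVec, Matrix.mul_nonsing_inv A hinv, one_mulVec]
  set p : n → ℝ := fun i => max (x i) 0 with hp
  set m : n → ℝ := fun i => max (-x i) 0 with hm
  have hpm : ∀ i, x i = p i - m i := by
    intro i
    rcases le_total (x i) 0 with h | h
    · simp [hp, hm, max_eq_right h, max_eq_left (neg_nonneg.mpr h)]
    · simp [hp, hm, max_eq_left h, max_eq_right (neg_nonpos.mpr h)]
  have hpnn : ∀ i, 0 ≤ p i := fun i => le_max_right _ _
  have hmnn : ∀ i, 0 ≤ m i := fun i => le_max_right _ _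
  have hprod : ∀ i, p i * m i = 0 := by
    intro i
    rcases le_total (x i) 0 with h | h
    · simp [hp, max_eq_right h]
    · simp [hm, max_eq_right (neg_nonpos.mpr h)]
  -- m ⬝ A p ≤ 0
  have hmap : m ⬝ᵥ A *ᵥ p ≤ 0 := by
    rw [dotProduct, ]
    refine Finset.sum_nonpos fun i _ => ?_
    rw [mulVec, dotProduct, Finset.mul_sum]
    refine Finset.sum_nonpos fun k _ => ?_
    rcases eq_or_ne i k with rfl | hik
    · have : m i * (A i i * p i) = A i i * (p i * m i) := by ring
      rw [this, hprod, mul_zero]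
    · exact mul_nonpos_of_nonneg_of_nonpos (hmnn i)
        (mul_nonpos_of_nonpos_of_nonneg (hoff i k hik) (hpnn k))
  have hxm : x = p - m := funext fun i => by rw [Pi.sub_apply, hpm]
  have hmm0 : m ⬝ᵥ A *ᵥ m = 0 := by
    have e1 : m ⬝ᵥ A *ᵥ x = m j := by
      rw [hAx, dotProduct_single, mul_one]
    have e2 : m ⬝ᵥ A *ᵥ x = m ⬝ᵥ A *ᵥ p - m ⬝ᵥ A *ᵥ m := by
      rw [hxm, mulVec_sub, dotProduct_sub]
    have h0 : 0 ≤ m ⬝ᵥ A *ᵥ m := by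
      have := hpsd.dotProduct_mulVec_nonneg m
      rwa [star_trivial] at this
    have hj : 0 ≤ m j := hmnn j
    nlinarith [hmap]
  have hAm : A *ᵥ m = 0 := by
    have := hpsd.dotProduct_mulVec_zero_iff m
    rw [star_trivial] at this
    exact this.mp hmm0
  have hm0 : m = 0 := by
    have : A⁻¹ *ᵥ (A *ᵥ m) = m := by
      rw [mulVec_mulVec, Matrix.nonsing_inv_mul A hinv, one_mulVec]
    rw [hAm, mulVec_zero] at this
    exact this.symm
  have hxi : 0 ≤ x i0 := by
    rw [hpm i0, hm0]
    simpa using hpnn i0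
  have : x i0 = A⁻¹ i0 j := by
    rw [hxdef, mulVec_single]; simp
  rwa [this] at hxi



theorem schur_complement_of_laplacian_is_laplacian
    {V : Type*} [Fintype V] [DecidableEq V]
    (L : Matrix V V ℝ)
    (hsym : L.IsSymm)
    (hoff : ∀ u v : V, u ≠ v → L u v ≤ 0)
    (hdiag : ∀ v : V, L v v = -∑ u ∈ Finset.univ.erase v, L u v)
    (S : Finset V)
    (hinv : IsUnit (L.submatrix (fun a : ↥S => (a : V)) (fun a : ↥S => (a : V))).det) :
    (schurCompl L S).IsSymm
    ∧ (∀ u v : ↥Sᶜ, u ≠ v → schurCompl L S u v ≤ 0)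
    ∧ (∀ v : ↥Sᶜ, ∑ u : ↥Sᶜ, schurCompl L S u v = 0) := by
  have hL : ∀ u v : V, L v u = L u v := fun u v => congrFun (congrFun hsym u) v
  have hcoln : ∀ v : V, ∑ u : V, L u v = 0 := by
    intro v
    rw [← Finset.add_sum_erase Finset.univ (fun u => L u v) (Finset.mem_univ v), hdiag v]
    ring
  simp only [schurCompl]
  set A := L.submatrix (fun a : ↥S => (a : V)) (fun a : ↥S => (a : V)) with hA
  set B := L.submatrix (fun a : ↥S => (a : V)) (fun a : ↥Sᶜ => (a : V)) with hB
  set C := L.submatrix (fun a : ↥Sᶜ => (a : V)) (fun a : ↥S => (a : V)) with hC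
  set D := L.submatrix (fun a : ↥Sᶜ => (a : V)) (fun a : ↥Sᶜ => (a : V)) with hD
  have hne : ∀ (u : ↥Sᶜ) (s : ↥S), (u : V) ≠ (s : V) := by
    intro u s h
    exact (Finset.mem_compl.mp u.2) (h ▸ s.2)
  have hAsym : Aᵀ = A := by
    ext i j; exact hL _ _
  have hoffA : ∀ i j : ↥S, i ≠ j → A i j ≤ 0 := fun i j hij =>
    hoff _ _ (fun h => hij (Subtype.ext h))
  have hdomA : ∀ s : ↥S, 0 ≤ A s s + ∑ t ∈ Finset.univ.erase s, A s t := by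
    intro s
    set f : V → ℝ := fun w => if w = (s : V) then 0 else L (s : V) w with hf
    have h1 : ∑ t ∈ Finset.univ.erase s, A s t = ∑ w ∈ S, f w := by
      rw [← Finset.sum_coe_sort S f]
      rw [show (∑ t : ↥S, f (t : V)) = ∑ t : ↥S,
        (if t = s then 0 else L (s : V) (t : V)) from Finset.sum_congr rfl
          (fun t _ => by simp only [hf, Subtype.ext_iff])]
      rw [← Finset.sum_erase (f := fun t : ↥S => if t = s then 0 else L (s : V) (t : V))
        (a := s) Finset.univ (by simp)]
      refine Finset.sum_congr rfl fun t ht => ?_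
      rw [if_neg (Finset.ne_of_mem_erase ht)]
      rfl
    have h2 : ∑ w ∈ Finset.univ, f w = ∑ w ∈ Finset.univ.erase (s : V), L (s : V) w := by
      rw [← Finset.sum_erase (f := f) (a := (s : V)) Finset.univ (by simp [hf])]
      refine Finset.sum_congr rfl fun w hw => ?_
      simp [hf, Finset.ne_of_mem_erase hw]
    have h3 : ∑ w ∈ Finset.univ, f w ≤ ∑ w ∈ S, f w := by
      have h := Finset.sum_le_sum_of_subset_of_nonneg (Finset.subset_univ S)
        (f := fun w => -f w) ?_
      · simp only [Finset.sum_neg_distrib] at h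
        linarith
      · intro w _ hwS
        have hwne : w ≠ (s : V) := fun h => hwS (h ▸ s.2)
        simp only [hf, if_neg hwne, neg_nonneg]
        exact hoff _ _ (Ne.symm hwne)
    have h4 : A s s = -∑ w ∈ Finset.univ.erase (s : V), L (s : V) w := by
      rw [show A s s = L (s : V) (s : V) from rfl, hdiag]
      congr 1
      exact Finset.sum_congr rfl fun w _ => hL _ _
    rw [h1, h4]
    linarith [h3, h2.symm.le, h2.le]
  have hpsdA : A.PosSemidef := aux_psd A hAsym hoffA hdomA
  have hAinv : ∀ i j : ↥S, 0 ≤ A⁻¹ i j := aux_inv_nonneg A hpsdA hoffA hinv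
  refine ⟨?_, ?_, ?_⟩
  · -- symmetry
    have hBt : Bᵀ = C := by ext i j; exact hL _ _
    have hCt : Cᵀ = B := by ext i j; exact hL _ _
    have hDt : Dᵀ = D := by ext i j; exact hL _ _
    have hAit : (A⁻¹)ᵀ = A⁻¹ := by rw [Matrix.transpose_nonsing_inv, hAsym]
    show (D - C * A⁻¹ * B)ᵀ = D - C * A⁻¹ * B
    rw [transpose_sub, transpose_mul, transpose_mul, hBt, hCt, hDt, hAit,
      ← Matrix.mul_assoc]
  · -- off-diagonal
    intro u v huv
    have hDuv : D u v ≤ 0 := hoff _ _ (fun h => huv (Subtype.ext h))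
    have hP : 0 ≤ (C * A⁻¹ * B) u v := by
      rw [Matrix.mul_apply]
      refine Finset.sum_nonneg fun t _ => ?_
      refine mul_nonneg_of_nonpos_of_nonpos ?_ (hoff _ _ (Ne.symm (hne v t)))
      rw [Matrix.mul_apply]
      refine Finset.sum_nonpos fun s _ => ?_
      exact mul_nonpos_of_nonpos_of_nonneg (hoff _ _ (hne u s)) (hAinv s t)
    simp only [Matrix.sub_apply]
    linarith
  · -- column sums
    intro v
    set oneS : ↥S → ℝ := fun _ => 1 with hoS
    set oneT : ↥Sᶜ → ℝ := fun _ => 1 with hoT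
    have hsplit : ∀ w : V, (∑ a : ↥S, L (a : V) w) + (∑ a : ↥Sᶜ, L (a : V) w) = 0 := by
      intro w
      rw [Finset.sum_coe_sort S (fun u => L u w),
        Finset.sum_coe_sort Sᶜ (fun u => L u w),
        Finset.sum_add_sum_compl S (fun u => L u w)]
      exact hcoln w
    have hvC : oneT ᵥ* C = -(oneS ᵥ* A) := by
      funext s
      simp only [vecMul, dotProduct, Pi.neg_apply, hoS, hoT, one_mul, hA, hC,
        submatrix_apply]
      have := hsplit (s : V)
      linarith
    have hvB : oneS ᵥ* B = -(oneT ᵥ* D) := by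
      funext w
      simp only [vecMul, dotProduct, Pi.neg_apply, hoS, hoT, one_mul, hB, hD,
        submatrix_apply]
      have := hsplit (w : V)
      linarith
    have key : oneT ᵥ* (C * A⁻¹ * B) = oneT ᵥ* D := by
      calc oneT ᵥ* (C * A⁻¹ * B) = ((oneT ᵥ* C) ᵥ* A⁻¹) ᵥ* B := by
            rw [Matrix.mul_assoc, vecMul_vecMul, vecMul_vecMul]
        _ = -((((oneS ᵥ* A) ᵥ* A⁻¹)) ᵥ* B) := by
            rw [hvC, Matrix.neg_vecMul, Matrix.neg_vecMul]
        _ = -((oneS ᵥ* (A * A⁻¹)) ᵥ* B) := by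
            simp only [vecMul_vecMul, Matrix.mul_assoc]
        _ = -(oneS ᵥ* B) := by rw [Matrix.mul_nonsing_inv A hinv, vecMul_one]
        _ = oneT ᵥ* D := by rw [hvB, neg_neg]
    have expand : ∑ u : ↥Sᶜ, (D - C * A⁻¹ * B) u v
        = (oneT ᵥ* D) v - (oneT ᵥ* (C * A⁻¹ * B)) v := by
      simp only [vecMul, dotProduct, Matrix.sub_apply, hoT, one_mul, Finset.sum_sub_distrib]
    rw [expand, key, sub_self]
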